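/- arXiv:1209.2740 — 2 statements merged into one kernel-verified Lean document; each statement's English description precedes it below -/
import Mathlib

section
/- Let τ, δ be real numbers with 0 < δ ≤ τ, and define K₋(α) = sin(πδα)·sin(π(2τ−δ)α)/(π²δα²) for α ≠ 0 (extended continuously at α = 0). Then for every real number t, one has U_{τ−δ}(t) ≤ ∫_{-∞}^{∞} e(αt) K₋(α) dα ≤ U_τ(t), where U_a denotes the indicator function of the interval (−a, a) and e(z) = e^{2πiz}. -/
open Real MeasureTheory Set

open scoped FourierTransform

noncomputable def myTrap (τ δ t : ℝ) : ℝ := (max (τ - |t|) 0 - max (τ - δ - |t|) 0) / δ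

lemma myTrap_cont (τ δ : ℝ) : Continuous (myTrap τ δ) := by unfold myTrap; fun_prop

lemma myTrap_even (τ δ t : ℝ) : myTrap τ δ (-t) = myTrap τ δ t := by simp [myTrap]

lemma myTrap_supp (τ δ : ℝ) (hδ : 0 ≤ δ) (t : ℝ) (ht : τ ≤ |t|) : myTrap τ δ t = 0 := by
  unfold myTrap
  rw [max_eq_right (by linarith), max_eq_right (by linarith)]
  simp

lemma tri_cont (a b : ℝ) : Continuous (fun t : ℝ => max (a - |t|) 0 * Real.cos (b * t)) := by
  fun_prop

lemma tri_hcs (a b : ℝ) : HasCompactSupport (fun t : ℝ => max (a - |t|) 0 * Real.cos (b * t)) := by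
  apply HasCompactSupport.intro (isCompact_Icc (a := -|a|) (b := |a|))
  intro x hx
  simp only [Set.mem_Icc, not_and_or, not_le] at hx
  have h : a < |x| := by
    rcases hx with h | h
    · calc a ≤ |a| := le_abs_self a
        _ < -x := by linarith
        _ ≤ |x| := by rw [abs_eq_max_neg]; exact le_max_right _ _
    · calc a ≤ |a| := le_abs_self a
        _ < x := h
        _ ≤ |x| := le_abs_self x
  rw [max_eq_right (by linarith), zero_mul]

lemma tri_int (a b : ℝ) : Integrable (fun t : ℝ => max (a - |t|) 0 * Real.cos (b * t)) :=
  (tri_cont a b).integrable_of_hasCompactSupport (tri_hcs a b)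

lemma tri_integral {a b : ℝ} (ha : 0 ≤ a) (hb : b ≠ 0) :
    ∫ t : ℝ, max (a - |t|) 0 * Real.cos (b * t) = 2 * (1 - Real.cos (b * a)) / b ^ 2 := by
  have hsupp : ∀ t : ℝ, t ∉ Set.Ioc (-a) a → max (a - |t|) 0 * Real.cos (b * t) = 0 := by
    intro t ht
    have : a ≤ |t| := by
      rcases not_and_or.1 (fun h => ht ⟨h.1, h.2⟩) with h | h
      · push_neg at h; rw [abs_of_nonpos (by linarith)]; linarith
      · push_neg at h; rw [abs_of_pos (by linarith)]; linarith
    rw [max_eq_right (by linarith), zero_mul]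
  rw [← MeasureTheory.setIntegral_eq_integral_of_forall_compl_eq_zero hsupp,
      ← intervalIntegral.integral_of_le (by linarith : -a ≤ a)]
  have hI2 : ∫ x in (0:ℝ)..a, max (a - |x|) 0 * Real.cos (b * x)
      = (1 - Real.cos (b * a)) / b ^ 2 := by
    have hcong : Set.EqOn (fun x => max (a - |x|) 0 * Real.cos (b * x))
        (fun x => (a - x) * Real.cos (b * x)) (Set.uIcc 0 a) := by
      intro x hx
      rw [Set.uIcc_of_le ha] at hx
      simp only
      rw [abs_of_nonneg hx.1, max_eq_left (by linarith [hx.2])]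
    rw [intervalIntegral.integral_congr hcong]
    have hder : ∀ x ∈ Set.uIcc (0:ℝ) a,
        HasDerivAt (fun x => (a - x) * Real.sin (b * x) / b - Real.cos (b * x) / b ^ 2)
          ((a - x) * Real.cos (b * x)) x := by
      intro x _
      have hb1 : HasDerivAt (fun x : ℝ => b * x) b x := by
        simpa using (hasDerivAt_id x).const_mul b
      have h1 : HasDerivAt (fun x => (a - x) * Real.sin (b * x) / b)
          (((-1) * Real.sin (b * x) + (a - x) * (Real.cos (b * x) * b)) / b) x :=
        (((hasDerivAt_id x).const_sub a).mul hb1.sin).div_const b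
      have h2 : HasDerivAt (fun x => Real.cos (b * x) / b ^ 2)
          ((-Real.sin (b * x) * b) / b ^ 2) x := hb1.cos.div_const (b ^ 2)
      have := h1.sub h2
      convert this using 1
      case e'_4 => rfl
      case e'_5 => rfl
      case e'_8 => rfl
      field_simp
      ring
    rw [intervalIntegral.integral_eq_sub_of_hasDerivAt hder
      (((continuous_const.sub continuous_id).mul
        (Real.continuous_cos.comp (continuous_const.mul continuous_id))).intervalIntegrable 0 a)]
    simp [mul_zero, Real.sin_zero, Real.cos_zero]
    field_simp
    ring
  have hI1 : ∫ x in (-a)..(0:ℝ), max (a - |x|) 0 * Real.cos (b * x)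
      = (1 - Real.cos (b * a)) / b ^ 2 := by
    have := intervalIntegral.integral_comp_neg (a := 0) (b := a)
      (fun x => max (a - |x|) 0 * Real.cos (b * x))
    simp only [abs_neg, mul_neg, Real.cos_neg, neg_zero] at this
    rw [← this, hI2]
  rw [← intervalIntegral.integral_add_adjacent_intervals
    ((tri_cont a b).intervalIntegrable (-a) 0) ((tri_cont a b).intervalIntegrable 0 a),
    hI1, hI2]
  ring

lemma fourier_trap (τ δ : ℝ) (hδ : 0 < δ) (hδτ : δ ≤ τ) (α : ℝ) (hα : α ≠ 0) :
    𝓕 (fun t : ℝ => (myTrap τ δ t : ℂ)) α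
      = (Real.sin (π * δ * α) * Real.sin (π * (2 * τ - δ) * α) / (π ^ 2 * δ * α ^ 2) : ℝ) := by
  rw [Real.fourier_real_eq_integral_exp_smul]
  have hsplit : ∀ v : ℝ,
      Complex.exp (↑(-2 * π * v * α) * Complex.I) • (myTrap τ δ v : ℂ)
        = ((Real.cos (2 * π * α * v) * myTrap τ δ v : ℝ) : ℂ)
          + ((-(Real.sin (2 * π * α * v) * myTrap τ δ v) : ℝ) : ℂ) * Complex.I := by
    intro v
    rw [smul_eq_mul, Complex.exp_mul_I,
      show ((-2 * π * v * α : ℝ) : ℂ) = -((2 * π * α * v : ℝ) : ℂ) by push_cast; ring,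
      Complex.cos_neg, Complex.sin_neg, ← Complex.ofReal_cos, ← Complex.ofReal_sin]
    push_cast
    ring
  simp_rw [hsplit]
  have hτpos : (0:ℝ) ≤ τ := le_trans hδ.le hδτ
  have hint1 : Integrable (fun v : ℝ => Real.cos (2 * π * α * v) * myTrap τ δ v) := by
    apply Continuous.integrable_of_hasCompactSupport
      ((Real.continuous_cos.comp (by fun_prop)).mul (myTrap_cont τ δ))
    apply HasCompactSupport.intro (isCompact_Icc (a := -τ) (b := τ))
    intro x hx
    have : τ ≤ |x| := by
      simp only [Set.mem_Icc, not_and_or, not_le] at hx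
      rcases hx with h | h
      · rw [abs_of_neg (by linarith)]; linarith
      · rw [abs_of_pos (by linarith)]; linarith
    rw [Pi.mul_apply, myTrap_supp τ δ hδ.le x this, mul_zero]
  have hint2 : Integrable (fun v : ℝ => Real.sin (2 * π * α * v) * myTrap τ δ v) := by
    apply Continuous.integrable_of_hasCompactSupport
      ((Real.continuous_sin.comp (by fun_prop)).mul (myTrap_cont τ δ))
    apply HasCompactSupport.intro (isCompact_Icc (a := -τ) (b := τ))
    intro x hx
    have : τ ≤ |x| := by
      simp only [Set.mem_Icc, not_and_or, not_le] at hx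
      rcases hx with h | h
      · rw [abs_of_neg (by linarith)]; linarith
      · rw [abs_of_pos (by linarith)]; linarith
    rw [Pi.mul_apply, myTrap_supp τ δ hδ.le x this, mul_zero]
  have hneg : Integrable (fun v : ℝ => -(Real.sin (2 * π * α * v) * myTrap τ δ v)) := hint2.neg
  have hsum : (∫ v : ℝ, (((Real.cos (2 * π * α * v) * myTrap τ δ v : ℝ) : ℂ)
          + ((-(Real.sin (2 * π * α * v) * myTrap τ δ v) : ℝ) : ℂ) * Complex.I))
      = (∫ v : ℝ, ((Real.cos (2 * π * α * v) * myTrap τ δ v : ℝ) : ℂ))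
        + ∫ v : ℝ, ((-(Real.sin (2 * π * α * v) * myTrap τ δ v) : ℝ) : ℂ) * Complex.I :=
    integral_add hint1.ofReal (hneg.ofReal.mul_const Complex.I)
  have e1 : (∫ v : ℝ, ((Real.cos (2 * π * α * v) * myTrap τ δ v : ℝ) : ℂ))
      = ((∫ v : ℝ, Real.cos (2 * π * α * v) * myTrap τ δ v : ℝ) : ℂ) := integral_ofReal
  have e2 : (∫ v : ℝ, ((-(Real.sin (2 * π * α * v) * myTrap τ δ v) : ℝ) : ℂ))
      = ((∫ v : ℝ, -(Real.sin (2 * π * α * v) * myTrap τ δ v) : ℝ) : ℂ) := integral_ofReal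
  rw [hsum, integral_mul_const, e1, e2]
  have hodd : ∫ v : ℝ, -(Real.sin (2 * π * α * v) * myTrap τ δ v) = 0 := by
    have h1 : ∫ v : ℝ, -(Real.sin (2 * π * α * v) * myTrap τ δ v)
        = ∫ v : ℝ, -(Real.sin (2 * π * α * (-v)) * myTrap τ δ (-v)) := by
      exact (MeasureTheory.integral_neg_eq_self _ _).symm
    have h2 : ∀ v : ℝ, -(Real.sin (2 * π * α * (-v)) * myTrap τ δ (-v))
        = Real.sin (2 * π * α * v) * myTrap τ δ v := by
      intro v
      rw [myTrap_even, show 2 * π * α * (-v) = -(2 * π * α * v) by ring, Real.sin_neg]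
      ring
    simp_rw [h2] at h1
    have h3 : ∫ v : ℝ, -(Real.sin (2 * π * α * v) * myTrap τ δ v)
        = -∫ v : ℝ, Real.sin (2 * π * α * v) * myTrap τ δ v := integral_neg _
    linarith
  rw [hodd]
  have hcos : ∫ v : ℝ, Real.cos (2 * π * α * v) * myTrap τ δ v
      = Real.sin (π * δ * α) * Real.sin (π * (2 * τ - δ) * α) / (π ^ 2 * δ * α ^ 2) := by
    have hre : ∀ v : ℝ, Real.cos (2 * π * α * v) * myTrap τ δ v
        = (max (τ - |v|) 0 * Real.cos (2 * π * α * v)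
            - max (τ - δ - |v|) 0 * Real.cos (2 * π * α * v)) / δ := by
      intro v; unfold myTrap; field_simp
    simp_rw [hre]
    rw [integral_div, integral_sub (tri_int τ (2 * π * α)) (tri_int (τ - δ) (2 * π * α))]
    have hb : (2 * π * α) ≠ 0 := by
      have := Real.pi_pos
      rcases hα.lt_or_gt with h | h <;> nlinarith
    rw [tri_integral hτpos hb, tri_integral (by linarith : (0:ℝ) ≤ τ - δ) hb]
    have key : Real.cos (2 * π * α * (τ - δ)) - Real.cos (2 * π * α * τ)
        = 2 * Real.sin (π * (2 * τ - δ) * α) * Real.sin (π * δ * α) := by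
      rw [Real.cos_sub_cos,
        show (2 * π * α * (τ - δ) + 2 * π * α * τ) / 2 = π * (2 * τ - δ) * α by ring,
        show (2 * π * α * (τ - δ) - 2 * π * α * τ) / 2 = -(π * δ * α) by ring,
        Real.sin_neg]
      ring
    have hπ : (π : ℝ) ≠ 0 := Real.pi_ne_zero
    field_simp
    rw [show π * α * δ = π * δ * α by ring, show π * α * (2 * τ - δ) = π * (2 * τ - δ) * α by ring]
    linear_combination key
  rw [hcos]
  push_cast
  ring

theorem stmt_0 (τ δ : ℝ) (hδ : 0 < δ) (hδτ : δ ≤ τ)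
    (Km : ℝ → ℝ) (hKcont : Continuous Km)
    (hKm : ∀ α : ℝ, α ≠ 0 →
      Km α = Real.sin (π * δ * α) * Real.sin (π * (2 * τ - δ) * α) / (π ^ 2 * δ * α ^ 2))
    (t : ℝ) :
    Set.indicator (Set.Ioo (-(τ - δ)) (τ - δ)) (fun _ => (1 : ℝ)) t ≤
      (∫ α : ℝ, Complex.exp (2 * π * Complex.I * α * t) * (Km α : ℂ)).re ∧
    (∫ α : ℝ, Complex.exp (2 * π * Complex.I * α * t) * (Km α : ℂ)).re ≤
      Set.indicator (Set.Ioo (-τ) τ) (fun _ => (1 : ℝ)) t := by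
  have hτpos : (0:ℝ) < τ := lt_of_lt_of_le hδ hδτ
  have hπ := Real.pi_pos
  set F : ℝ → ℂ := fun x => (myTrap τ δ x : ℂ) with hF
  have hFc : Continuous F := Complex.continuous_ofReal.comp (myTrap_cont τ δ)
  have hFcs : HasCompactSupport F := by
    apply HasCompactSupport.intro (isCompact_Icc (a := -τ) (b := τ))
    intro x hx
    have : τ ≤ |x| := by
      simp only [Set.mem_Icc, not_and_or, not_le] at hx
      rcases hx with h | h
      · rw [abs_of_neg (by linarith)]; linarith
      · rw [abs_of_pos (by linarith)]; linarith
    simp [hF, myTrap_supp τ δ hδ.le x this]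
  have hFint : Integrable F := hFc.integrable_of_hasCompactSupport hFcs
  have h0 : ∀ᵐ α : ℝ, α ≠ 0 := by
    refine MeasureTheory.ae_iff.mpr ?_
    have : {a : ℝ | ¬ a ≠ 0} = {0} := by ext x; simp
    rw [this]
    exact measure_singleton 0
  -- bound on Km
  have hKmbound : ∀ α : ℝ, α ≠ 0 →
      ‖Km α‖ ≤ ((2 * τ - δ) + 1 / (π ^ 2 * δ)) * (1 + α ^ 2)⁻¹ := by
    intro α hα
    have hd : (0:ℝ) < π ^ 2 * δ * α ^ 2 := by positivity
    have h2τδ : (0:ℝ) ≤ 2 * τ - δ := by linarith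
    have e1 : |π * δ * α| = π * δ * |α| := by
      rw [abs_mul, abs_mul, abs_of_pos hπ, abs_of_pos hδ]
    have e2 : |π * (2 * τ - δ) * α| = π * (2 * τ - δ) * |α| := by
      rw [abs_mul, abs_mul, abs_of_pos hπ, abs_of_nonneg h2τδ]
    have h1 : |Real.sin (π * δ * α)| ≤ π * δ * |α| := by
      rw [← e1]; exact Real.abs_sin_le_abs
    have h2 : |Real.sin (π * (2 * τ - δ) * α)| ≤ π * (2 * τ - δ) * |α| := by
      rw [← e2]; exact Real.abs_sin_le_abs
    have h1' : |Real.sin (π * δ * α)| ≤ 1 := Real.abs_sin_le_one _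
    have h2' : |Real.sin (π * (2 * τ - δ) * α)| ≤ 1 := Real.abs_sin_le_one _
    have p1 : |Real.sin (π * δ * α)| * |Real.sin (π * (2 * τ - δ) * α)|
        ≤ (π * δ * |α|) * (π * (2 * τ - δ) * |α|) :=
      mul_le_mul h1 h2 (abs_nonneg _) (by positivity)
    have p2 : |Real.sin (π * δ * α)| * |Real.sin (π * (2 * τ - δ) * α)| ≤ 1 := by
      calc _ ≤ 1 * 1 := mul_le_mul h1' h2' (abs_nonneg _) one_pos.le
        _ = 1 := one_mul 1
    have e3 : |α| * |α| = α ^ 2 := by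
      rw [← abs_mul, abs_mul_self, sq]
    have hfield : (1 / (π ^ 2 * δ)) * (π ^ 2 * δ * α ^ 2) = α ^ 2 := by
      field_simp
    rw [hKm α hα, Real.norm_eq_abs, abs_div, abs_of_pos hd, abs_mul,
      show ((2 * τ - δ) + 1 / (π ^ 2 * δ)) * (1 + α ^ 2)⁻¹
        = ((2 * τ - δ) + 1 / (π ^ 2 * δ)) / (1 + α ^ 2) by ring,
      div_le_div_iff₀ hd (by positivity : (0:ℝ) < 1 + α ^ 2)]
    rw [show π * δ * |α| * (π * (2 * τ - δ) * |α|)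
        = π ^ 2 * δ * (2 * τ - δ) * (|α| * |α|) by ring, e3] at p1
    have p2' : |Real.sin (π * δ * α)| * |Real.sin (π * (2 * τ - δ) * α)| * α ^ 2 ≤ α ^ 2 := by
      nlinarith [p2, sq_nonneg α, mul_nonneg (abs_nonneg (Real.sin (π * δ * α)))
        (abs_nonneg (Real.sin (π * (2 * τ - δ) * α)))]
    nlinarith [p1, p2', hfield]
  have hKmInt : Integrable Km := by
    refine (integrable_inv_one_add_sq.const_mul ((2 * τ - δ) + 1 / (π ^ 2 * δ))).mono'
      hKcont.aestronglyMeasurable ?_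
    filter_upwards [h0] with α hα
    exact hKmbound α hα
  have hKmCInt : Integrable (fun α : ℝ => (Km α : ℂ)) := hKmInt.ofReal
  have haeEq : (fun α : ℝ => (Km α : ℂ)) =ᵐ[volume] 𝓕 F := by
    filter_upwards [h0] with α hα
    rw [fourier_trap τ δ hδ hδτ α hα, hKm α hα]
  have hFTint : Integrable (𝓕 F) := hKmCInt.congr haeEq
  have hinv : 𝓕⁻ (𝓕 F) = F := hFc.fourierInv_fourier_eq hFint hFTint
  have hmain : (∫ α : ℝ, Complex.exp (2 * π * Complex.I * α * t) * (Km α : ℂ)) = F t := by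
    have e1 : (∫ α : ℝ, Complex.exp (2 * π * Complex.I * α * t) * (Km α : ℂ))
        = 𝓕⁻ (fun α : ℝ => (Km α : ℂ)) t := by
      rw [Real.fourierInv_eq_fourier_neg,
          Real.fourier_real_eq_integral_exp_smul]
      refine integral_congr_ae (Filter.Eventually.of_forall fun α => ?_)
      simp only [smul_eq_mul]
      rw [show ((-2 * π * α * (-t) : ℝ) : ℂ) * Complex.I = 2 * π * Complex.I * α * t by
          push_cast; ring]
    have e2 : 𝓕⁻ (fun α : ℝ => (Km α : ℂ)) t = 𝓕⁻ (𝓕 F) t := by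
      rw [Real.fourierInv_eq, Real.fourierInv_eq]
      refine integral_congr_ae (haeEq.mono fun α h => ?_)
      dsimp only
      rw [show ((Km α : ℝ) : ℂ) = 𝓕 F α from h]
    rw [e1, e2, hinv]
  rw [hmain]
  simp only [hF, Complex.ofReal_re]
  constructor
  · by_cases ht : t ∈ Set.Ioo (-(τ - δ)) (τ - δ)
    · rw [Set.indicator_of_mem ht]
      have habs : |t| < τ - δ := abs_lt.2 ⟨by linarith [ht.1], ht.2⟩
      unfold myTrap
      rw [max_eq_left (by linarith), max_eq_left (by linarith)]
      rw [show τ - |t| - (τ - δ - |t|) = δ by ring]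
      rw [div_self hδ.ne']
    · rw [Set.indicator_of_notMem ht]
      have hmono : max (τ - δ - |t|) 0 ≤ max (τ - |t|) 0 :=
        max_le_max (by linarith) le_rfl
      unfold myTrap
      exact div_nonneg (by linarith) hδ.le
  · by_cases ht : t ∈ Set.Ioo (-τ) τ
    · rw [Set.indicator_of_mem ht]
      have habs : |t| < τ := abs_lt.2 ⟨by linarith [ht.1], ht.2⟩
      unfold myTrap
      rw [div_le_one hδ]
      rcases le_or_gt (τ - δ - |t|) 0 with h | h
      · rw [max_eq_right h]
        have : max (τ - |t|) 0 ≤ δ := max_le (by linarith) hδ.le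
        linarith
      · rw [max_eq_left h.le, max_eq_left (by linarith)]
        linarith
    · rw [Set.indicator_of_notMem ht]
      have habs : τ ≤ |t| := by
        simp only [Set.mem_Ioo, not_and_or, not_lt] at ht
        rcases ht with h | h
        · rw [abs_of_neg (by linarith)]; linarith
        · rw [abs_of_nonneg (by linarith)]; exact h
      rw [myTrap_supp τ δ hδ.le t habs]
end

section
/- Let τ, δ be real numbers with 0 < δ ≤ τ, and define K₊(α) = sin(πδα)·sin(π(2τ+δ)α)/(π²δα²) for α ≠ 0 (extended continuously at α = 0). Then for every real number t, one has U_τ(t) ≤ ∫_{-∞}^{∞} e(αt) K₊(α) dα ≤ U_{τ+δ}(t). -/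
set_option maxHeartbeats 1000000

open Real MeasureTheory Set intervalIntegral FourierTransform

lemma aux_lin_exp (c : ℂ) (hc : c ≠ 0) (r a b : ℝ) :
    ∫ t in a..b, ((t : ℂ) + r) * Complex.exp (c * t) =
      (((b : ℂ) + r)/c - 1/c^2) * Complex.exp (c * b) -
      (((a : ℂ) + r)/c - 1/c^2) * Complex.exp (c * a) := by
  have H : ∀ t : ℝ, HasDerivAt (fun t : ℝ => (((t : ℂ) + r)/c - 1/c^2) * Complex.exp (c * t))
      (((t : ℂ) + r) * Complex.exp (c * t)) t := by
    intro t
    have h1 : HasDerivAt (fun t : ℝ => ((t : ℂ) + r)/c - 1/c^2) c⁻¹ t := by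
      have h0 : HasDerivAt (fun t : ℝ => ((t : ℂ) + r)/c) c⁻¹ t := by
        simpa [one_div] using ((hasDerivAt_id t).ofReal_comp.add_const ((r:ℂ))).div_const c
      exact h0.sub_const _
    have h2 : HasDerivAt (fun t : ℝ => Complex.exp (c * t)) (c * Complex.exp (c * t)) t := by
      simpa [mul_comm] using (((hasDerivAt_id t).ofReal_comp).const_mul c).cexp
    have h3 := h1.mul h2
    convert h3 using 1
    · rfl
    · rfl
    · linear_combination (c⁻¹ * Complex.exp (c * t) - ((t:ℂ) + r) * Complex.exp (c * t)) *
        mul_inv_cancel₀ hc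
  rw [intervalIntegral.integral_eq_sub_of_hasDerivAt (fun t _ => H t)]
  exact (Continuous.intervalIntegrable (by continuity) _ _)

lemma aux_combine (d c E1 E2 E3 E4 : ℂ) (hd : d ≠ 0) (hc : c ≠ 0) :
    (d⁻¹ * (d/c - 1/c^2) * E4 - d⁻¹ * (0/c - 1/c^2) * E2) + (E3 - E4)/c
      + ((-d⁻¹) * (0/c - 1/c^2) * E1 - (-d⁻¹) * ((-d)/c - 1/c^2) * E3)
    = (E1 + E2 - E3 - E4)/(d * c^2) := by
  have hdd : d * d⁻¹ = 1 := mul_inv_cancel₀ hd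
  linear_combination ((E4 - E3)/c) * hdd

theorem stmt_1 (τ δ : ℝ) (hδ : 0 < δ) (hδτ : δ ≤ τ)
    (Kp : ℝ → ℝ) (hKcont : Continuous Kp)
    (hKp : ∀ α : ℝ, α ≠ 0 →
      Kp α = Real.sin (π * δ * α) * Real.sin (π * (2 * τ + δ) * α) / (π ^ 2 * δ * α ^ 2))
    (t : ℝ) :
    Set.indicator (Set.Ioo (-τ) τ) (fun _ => (1 : ℝ)) t ≤
      (∫ α : ℝ, Complex.exp (2 * π * Complex.I * α * t) * (Kp α : ℂ)).re ∧
    (∫ α : ℝ, Complex.exp (2 * π * Complex.I * α * t) * (Kp α : ℂ)).re ≤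
      Set.indicator (Set.Ioo (-(τ + δ)) (τ + δ)) (fun _ => (1 : ℝ)) t := by
  have hτ : 0 < τ := lt_of_lt_of_le hδ hδτ
  have hπ : (0:ℝ) < π := Real.pi_pos
  set T : ℝ → ℝ := fun x => (|x + (τ + δ)| + |x - (τ + δ)| - |x + τ| - |x - τ|) / (2*δ) with hTdef
  have hTcont : Continuous T := by
    apply Continuous.div_const
    exact (((continuous_id.add continuous_const).abs.add
      (continuous_id.sub continuous_const).abs).sub
      (continuous_id.add continuous_const).abs).sub (continuous_id.sub continuous_const).abs
  have hTzero : ∀ x : ℝ, τ + δ ≤ |x| → T x = 0 := by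
    intro x hx
    have hnum : |x + (τ + δ)| + |x - (τ + δ)| - |x + τ| - |x - τ| = 0 := by
      rcases abs_cases x with ⟨h, h'⟩ | ⟨h, h'⟩ <;>
        rcases abs_cases (x + (τ + δ)) with ⟨h1, h1'⟩ | ⟨h1, h1'⟩ <;>
        rcases abs_cases (x - (τ + δ)) with ⟨h2, h2'⟩ | ⟨h2, h2'⟩ <;>
        rcases abs_cases (x + τ) with ⟨h3, h3'⟩ | ⟨h3, h3'⟩ <;>
        rcases abs_cases (x - τ) with ⟨h4, h4'⟩ | ⟨h4, h4'⟩ <;> linarith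
    simp [hTdef, hnum]
  have hTone : ∀ x : ℝ, |x| ≤ τ → T x = 1 := by
    intro x hx
    have hx1 := abs_le.1 hx
    have hnum : |x + (τ + δ)| + |x - (τ + δ)| - |x + τ| - |x - τ| = 2*δ := by
      rcases abs_cases (x + (τ + δ)) with ⟨h1, h1'⟩ | ⟨h1, h1'⟩ <;>
        rcases abs_cases (x - (τ + δ)) with ⟨h2, h2'⟩ | ⟨h2, h2'⟩ <;>
        rcases abs_cases (x + τ) with ⟨h3, h3'⟩ | ⟨h3, h3'⟩ <;>
        rcases abs_cases (x - τ) with ⟨h4, h4'⟩ | ⟨h4, h4'⟩ <;> linarith [hx1.1, hx1.2]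
    rw [hTdef]
    simp only [hnum]
    field_simp
  have hTleft : ∀ x ∈ Set.uIcc (-(τ + δ)) (-τ), T x = (x + (τ + δ)) / δ := by
    intro x hx
    rw [Set.uIcc_of_le (by linarith)] at hx
    obtain ⟨hx1, hx2⟩ := hx
    have hnum : |x + (τ + δ)| + |x - (τ + δ)| - |x + τ| - |x - τ| = 2*(x + (τ + δ)) := by
      rcases abs_cases (x + (τ + δ)) with ⟨h1, h1'⟩ | ⟨h1, h1'⟩ <;>
        rcases abs_cases (x - (τ + δ)) with ⟨h2, h2'⟩ | ⟨h2, h2'⟩ <;>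
        rcases abs_cases (x + τ) with ⟨h3, h3'⟩ | ⟨h3, h3'⟩ <;>
        rcases abs_cases (x - τ) with ⟨h4, h4'⟩ | ⟨h4, h4'⟩ <;> linarith
    rw [hTdef]
    simp only [hnum]
    field_simp
  have hTright : ∀ x ∈ Set.uIcc τ (τ + δ), T x = ((τ + δ) - x) / δ := by
    intro x hx
    rw [Set.uIcc_of_le (by linarith)] at hx
    obtain ⟨hx1, hx2⟩ := hx
    have hnum : |x + (τ + δ)| + |x - (τ + δ)| - |x + τ| - |x - τ| = 2*((τ + δ) - x) := by
      rcases abs_cases (x + (τ + δ)) with ⟨h1, h1'⟩ | ⟨h1, h1'⟩ <;>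
        rcases abs_cases (x - (τ + δ)) with ⟨h2, h2'⟩ | ⟨h2, h2'⟩ <;>
        rcases abs_cases (x + τ) with ⟨h3, h3'⟩ | ⟨h3, h3'⟩ <;>
        rcases abs_cases (x - τ) with ⟨h4, h4'⟩ | ⟨h4, h4'⟩ <;> linarith
    rw [hTdef]
    simp only [hnum]
    field_simp
  -- the Fourier transform of T is Kp
  set Tc : ℝ → ℂ := fun x => ((T x : ℂ)) with hTcdef
  have hTccont : Continuous Tc := Complex.continuous_ofReal.comp hTcont
  have hTcint : Integrable Tc := by
    apply Continuous.integrable_of_hasCompactSupport hTccont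
    apply HasCompactSupport.intro (isCompact_Icc (a := -(τ+δ)) (b := τ+δ))
    intro x hx
    have : τ + δ ≤ |x| := by
      simp only [Set.mem_Icc, not_and_or, not_le] at hx
      rcases hx with h | h
      · rw [abs_of_neg (by linarith)]; linarith
      · rw [abs_of_pos (by linarith)]; linarith
    simp [hTcdef, hTzero x this]
  have hFT : ∀ α : ℝ, α ≠ 0 → 𝓕 Tc α = (Kp α : ℂ) := by
    intro α hα
    set c : ℂ := (↑(-2 * π * α) : ℂ) * Complex.I with hcdef
    have hc : c ≠ 0 := by
      rw [hcdef]
      refine mul_ne_zero (Complex.ofReal_ne_zero.mpr ?_) Complex.I_ne_zero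
      exact mul_ne_zero (mul_ne_zero (by norm_num) Real.pi_pos.ne') hα
    have hδc : ((δ:ℂ)) ≠ 0 := by exact_mod_cast hδ.ne'
    -- rewrite the Fourier integral
    rw [Real.fourier_real_eq_integral_exp_smul]
    have hg : ∀ v : ℝ, Complex.exp (↑(-2 * π * v * α) * Complex.I) • Tc v
        = Complex.exp (c * v) * Tc v := by
      intro v
      rw [smul_eq_mul]
      congr 2
      rw [hcdef]
      push_cast
      ring
    simp only [hg]
    set g : ℝ → ℂ := fun v => Complex.exp (c * v) * Tc v with hgdef
    have hgcont : Continuous g :=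
      (Complex.continuous_exp.comp (continuous_const.mul Complex.continuous_ofReal)).mul hTccont
    have h1 : (∫ v, g v) = ∫ v in Set.Ioc (-(τ + δ)) (τ + δ), g v := by
      rw [MeasureTheory.setIntegral_eq_integral_of_forall_compl_eq_zero]
      intro x hx
      have : τ + δ ≤ |x| := by
        simp only [Set.mem_Ioc, not_and_or, not_lt, not_le] at hx
        rcases hx with h | h
        · rw [abs_of_neg (by linarith)]; linarith
        · rw [abs_of_pos (by linarith)]; linarith
      simp [hgdef, hTcdef, hTzero x this]
    rw [h1, ← intervalIntegral.integral_of_le (by linarith)]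
    have i1 : IntervalIntegrable g volume (-(τ+δ)) (-τ) := hgcont.intervalIntegrable _ _
    have i2 : IntervalIntegrable g volume (-τ) τ := hgcont.intervalIntegrable _ _
    have i3 : IntervalIntegrable g volume τ (τ+δ) := hgcont.intervalIntegrable _ _
    rw [← intervalIntegral.integral_add_adjacent_intervals (i1.trans i2) i3,
      ← intervalIntegral.integral_add_adjacent_intervals i1 i2]
    have P1 : (∫ v in (-(τ+δ))..(-τ), g v)
        = (δ:ℂ)⁻¹ * ((δ:ℂ)/c - 1/c^2) * Complex.exp (c * (-τ:ℝ)) -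
          (δ:ℂ)⁻¹ * (0/c - 1/c^2) * Complex.exp (c * (-(τ+δ):ℝ)) := by
      rw [intervalIntegral.integral_congr (g := fun v : ℝ =>
          (δ:ℂ)⁻¹ * (((v:ℂ) + ((τ+δ:ℝ):ℂ)) * Complex.exp (c * v)))]
      · rw [intervalIntegral.integral_const_mul, aux_lin_exp c hc]
        push_cast
        ring
      · intro x hx
        simp only [hgdef, hTcdef, hTleft x hx]
        push_cast
        field_simp
    have P2 : (∫ v in (-τ:ℝ)..τ, g v)
        = (Complex.exp (c * (τ:ℝ)) - Complex.exp (c * (-τ:ℝ))) / c := by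
      rw [intervalIntegral.integral_congr (g := fun v : ℝ => Complex.exp (c * v))]
      · exact integral_exp_mul_complex hc
      · intro x hx
        rw [Set.uIcc_of_le (by linarith)] at hx
        have : T x = 1 := hTone x (abs_le.2 ⟨hx.1, hx.2⟩)
        simp [hgdef, hTcdef, this]
    have P3 : (∫ v in (τ:ℝ)..(τ+δ), g v)
        = (-(δ:ℂ)⁻¹) * (0/c - 1/c^2) * Complex.exp (c * (τ+δ:ℝ)) -
          (-(δ:ℂ)⁻¹) * ((-(δ:ℂ))/c - 1/c^2) * Complex.exp (c * (τ:ℝ)) := by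
      rw [intervalIntegral.integral_congr (g := fun v : ℝ =>
          (-(δ:ℂ)⁻¹) * (((v:ℂ) + ((-(τ+δ):ℝ):ℂ)) * Complex.exp (c * v)))]
      · rw [intervalIntegral.integral_const_mul, aux_lin_exp c hc]
        push_cast
        ring
      · intro x hx
        simp only [hgdef, hTcdef, hTright x hx]
        push_cast
        field_simp
        ring
    rw [P1, P2, P3]
    rw [aux_combine (δ:ℂ) c _ _ _ _ hδc hc]
    have hE : ∀ x : ℝ, Complex.exp (c * (x:ℝ)) + Complex.exp (c * (-x:ℝ))
        = ((2 * Real.cos (2*π*α*x) : ℝ) : ℂ) := by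
      intro x
      have e1 : c * (x:ℝ) = (↑(-(2*π*α*x)) : ℂ) * Complex.I := by rw [hcdef]; push_cast; ring
      have e2 : c * ((-x:ℝ):ℂ) = (↑(2*π*α*x) : ℂ) * Complex.I := by rw [hcdef]; push_cast; ring
      rw [show ((-x:ℝ):ℂ) = ((-x:ℝ):ℂ) from rfl] at e2
      rw [e1]
      rw [show c * ((-x : ℝ) : ℂ) = (↑(2*π*α*x) : ℂ) * Complex.I from e2]
      rw [Complex.exp_mul_I, Complex.exp_mul_I]
      rw [← Complex.ofReal_cos, ← Complex.ofReal_sin, ← Complex.ofReal_cos, ← Complex.ofReal_sin]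
      rw [Real.cos_neg, Real.sin_neg]
      push_cast
      ring
    have hc2 : c^2 = ((-(4*π^2*α^2) : ℝ) : ℂ) := by
      rw [hcdef]
      rw [mul_pow, Complex.I_sq]
      push_cast
      ring
    have hnum : Complex.exp (c * (τ+δ:ℝ)) + Complex.exp (c * (-(τ+δ):ℝ))
            - Complex.exp (c * (τ:ℝ)) - Complex.exp (c * (-τ:ℝ))
        = ((2 * Real.cos (2*π*α*(τ+δ)) - 2 * Real.cos (2*π*α*τ) : ℝ) : ℂ) := by
      have h1 := hE (τ+δ)
      have h2 := hE τ
      push_cast at h1 h2 ⊢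
      linear_combination h1 - h2
    rw [hnum, hc2, hKp α hα]
    rw [← Complex.ofReal_mul, ← Complex.ofReal_div, Complex.ofReal_inj]
    have key : Real.cos (2*π*α*τ) - Real.cos (2*π*α*(τ+δ))
        = 2 * Real.sin (π*δ*α) * Real.sin (π*(2*τ+δ)*α) := by
      rw [Real.cos_sub_cos]
      rw [show (2*π*α*τ + 2*π*α*(τ+δ))/2 = π*(2*τ+δ)*α by ring,
          show (2*π*α*τ - 2*π*α*(τ+δ))/2 = -(π*δ*α) by ring]
      rw [Real.sin_neg]
      ring
    have h1 : (δ * -(4*π^2*α^2)) ≠ 0 :=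
      mul_ne_zero hδ.ne' (neg_ne_zero.mpr (mul_ne_zero (mul_ne_zero (by norm_num)
        (pow_ne_zero 2 hπ.ne')) (pow_ne_zero 2 hα)))
    have h2 : (π^2 * δ * α^2) ≠ 0 :=
      mul_ne_zero (mul_ne_zero (pow_ne_zero 2 hπ.ne') hδ.ne') (pow_ne_zero 2 hα)
    rw [div_eq_div_iff h1 h2]
    linear_combination ((-2)*π^2*δ*α^2) * key
  -- Kp is integrable
  have hτδ : (0:ℝ) < 2*τ + δ := by linarith
  have hKint : Integrable Kp := by
    set C : ℝ := (2*τ + δ) + 1/(π^2*δ) with hCdef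
    have hg : Integrable (fun α : ℝ => C * (1 + α^2)⁻¹) := integrable_inv_one_add_sq.const_mul C
    apply hg.mono' hKcont.aestronglyMeasurable
    have h0 : ∀ᵐ (α : ℝ), α ≠ 0 := by
      rw [ae_iff]
      simp only [ne_eq, not_not]
      have : {a : ℝ | a = 0} = {0} := by ext a; simp
      rw [this]
      exact Real.volume_singleton
    filter_upwards [h0] with α hα
    rw [Real.norm_eq_abs, hKp α hα]
    have hd1 : (0:ℝ) < π^2*δ*α^2 := by positivity
    have hd2 : (0:ℝ) < 1 + α^2 := by positivity
    rw [abs_div, abs_of_pos hd1, abs_mul]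
    rw [inv_eq_one_div, mul_one_div, div_le_div_iff₀ hd1 hd2]
    have h1 : |Real.sin (π*δ*α)| ≤ π*δ*|α| := by
      calc |Real.sin (π*δ*α)| ≤ |π*δ*α| := Real.abs_sin_le_abs
        _ = π*δ*|α| := by rw [abs_mul, abs_of_pos (by positivity)]
    have h2 : |Real.sin (π*(2*τ+δ)*α)| ≤ π*(2*τ+δ)*|α| := by
      calc |Real.sin (π*(2*τ+δ)*α)| ≤ |π*(2*τ+δ)*α| := Real.abs_sin_le_abs
        _ = π*(2*τ+δ)*|α| := by rw [abs_mul, abs_of_pos (by positivity)]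
    have h1' : |Real.sin (π*δ*α)| ≤ 1 := Real.abs_sin_le_one _
    have h2' : |Real.sin (π*(2*τ+δ)*α)| ≤ 1 := Real.abs_sin_le_one _
    have key1 : |Real.sin (π*δ*α)| * |Real.sin (π*(2*τ+δ)*α)| ≤ (π*δ*|α|) * (π*(2*τ+δ)*|α|) :=
      mul_le_mul h1 h2 (abs_nonneg _) (by positivity)
    have key2 : |Real.sin (π*δ*α)| * |Real.sin (π*(2*τ+δ)*α)| ≤ 1 :=
      mul_le_one₀ h1' (abs_nonneg _) h2'
    have hc3 : (1/(π^2*δ))*(π^2*δ*α^2) = α^2 := by field_simp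
    have hsq : |α| * |α| = α^2 := by rw [abs_mul_abs_self]; ring
    have e : π*δ*|α| * (π*(2*τ+δ)*|α|) = (2*τ+δ)*(π^2*δ*α^2) := by
      rw [show π*δ*|α| * (π*(2*τ+δ)*|α|) = π^2*δ*(2*τ+δ)*(|α| * |α|) by ring, hsq]
      ring
    have key2' : |Real.sin (π*δ*α)| * |Real.sin (π*(2*τ+δ)*α)| * α^2 ≤ α^2 := by
      have h := mul_le_mul_of_nonneg_right key2 (sq_nonneg α)
      rwa [one_mul] at h
    have expand : C * (π^2*δ*α^2) = (2*τ+δ)*(π^2*δ*α^2) + 1/(π^2*δ)*(π^2*δ*α^2) := by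
      rw [hCdef]; ring
    calc |Real.sin (π*δ*α)| * |Real.sin (π*(2*τ+δ)*α)| * (1 + α^2)
        = |Real.sin (π*δ*α)| * |Real.sin (π*(2*τ+δ)*α)|
          + |Real.sin (π*δ*α)| * |Real.sin (π*(2*τ+δ)*α)| * α^2 := by ring
      _ ≤ (2*τ+δ)*(π^2*δ*α^2) + α^2 := add_le_add (e ▸ key1) key2'
      _ = C * (π^2*δ*α^2) := by rw [expand, hc3]
  -- Fourier transform of Tc is continuous
  have hFTcont : Continuous (𝓕 Tc) :=
    VectorFourier.fourierIntegral_continuous Real.continuous_fourierChar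
      (by exact continuous_inner) hTcint
  have hKeq : 𝓕 Tc = fun α => (Kp α : ℂ) := by
    apply Continuous.ext_on (dense_compl_singleton (0:ℝ)) hFTcont
      (Complex.continuous_ofReal.comp hKcont)
    intro α hα
    exact hFT α hα
  have hKint' : Integrable (𝓕 Tc) := by
    rw [hKeq]
    exact hKint.ofReal
  have hinv := hTccont.fourierInv_fourier_eq hTcint hKint'
  have hmain : (∫ α : ℝ, Complex.exp (2 * π * Complex.I * α * t) * (Kp α : ℂ)) = ((T t : ℝ) : ℂ) := by
    have h1 : 𝓕⁻ (fun α : ℝ => ((Kp α : ℝ) : ℂ)) t = ((T t : ℝ) : ℂ) := by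
      rw [← hKeq, hinv]
    rw [← h1, Real.fourierInv_eq_fourier_neg,
      Real.fourier_real_eq_integral_exp_smul]
    refine MeasureTheory.integral_congr_ae (Filter.Eventually.of_forall fun α => ?_)
    simp only [smul_eq_mul]
    congr 1
    push_cast
    ring
  have hre : (∫ α : ℝ, Complex.exp (2 * π * Complex.I * α * t) * (Kp α : ℂ)).re = T t := by
    rw [hmain, Complex.ofReal_re]
  rw [hre]
  constructor
  · by_cases ht : t ∈ Set.Ioo (-τ) τ
    · rw [Set.indicator_of_mem ht]
      rw [hTone t (abs_le.2 ⟨ht.1.le, ht.2.le⟩)]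
    · rw [Set.indicator_of_notMem ht]
      apply div_nonneg _ (by linarith)
      rcases abs_cases (t + (τ + δ)) with ⟨h1, h1'⟩ | ⟨h1, h1'⟩ <;>
        rcases abs_cases (t - (τ + δ)) with ⟨h2, h2'⟩ | ⟨h2, h2'⟩ <;>
        rcases abs_cases (t + τ) with ⟨h3, h3'⟩ | ⟨h3, h3'⟩ <;>
        rcases abs_cases (t - τ) with ⟨h4, h4'⟩ | ⟨h4, h4'⟩ <;> linarith
  · by_cases ht : t ∈ Set.Ioo (-(τ + δ)) (τ + δ)
    · rw [Set.indicator_of_mem ht]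
      rw [hTdef]
      rw [div_le_one (by linarith)]
      rcases abs_cases (t + (τ + δ)) with ⟨h1, h1'⟩ | ⟨h1, h1'⟩ <;>
        rcases abs_cases (t - (τ + δ)) with ⟨h2, h2'⟩ | ⟨h2, h2'⟩ <;>
        rcases abs_cases (t + τ) with ⟨h3, h3'⟩ | ⟨h3, h3'⟩ <;>
        rcases abs_cases (t - τ) with ⟨h4, h4'⟩ | ⟨h4, h4'⟩ <;> linarith
    · rw [Set.indicator_of_notMem ht]
      have : τ + δ ≤ |t| := by
        simp only [Set.mem_Ioo, not_and_or, not_lt] at ht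
        rcases ht with h | h
        · rw [abs_of_neg (by linarith)]; linarith
        · rw [abs_of_pos (by linarith)]; linarith
      rw [hTzero t this]
end
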